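/- Let L be a real Lie algebra, 𝒜 an affine representation of L modeled on a real vector space A, and (W, σ) a representation of L. Let p : 𝒜 → W be a polynomial of degree ≤ k with components (p_i) relative to a₀ ∈ 𝒜 and components (q_i) relative to a₀' ∈ 𝒜. Fix x ∈ L. Define P : 𝒜 → W as the polynomial whose components relative to a₀ are r_i(u₁,…,u_i) = σ(x)(p_i(u₁,…,u_i)) − Σ_{j=1}^i p_i(u₁,…,x⃗(u_j),…,u_i) − p_{i+1}(x·a₀, u₁,…,u_i) (with p_{k+1} = 0), and define Q : 𝒜 → W analogously from the components q_i relative to a₀'. Then P = Q as functions from 𝒜 to W. -/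
import Mathlib

set_option maxRecDepth 20000

open Finset

/-- Components of the polynomial `x·p` built from components `p` relative to a base point:
`(x·p)_i(u₁,…,u_i) = σx(p_i(u₁,…,u_i)) − Σ_j p_i(u₁,…,linx(u_j),…,u_i) − p_{i+1}(c,u₁,…,u_i)`,
where `c = x·a₀`. -/
def actedPolyComp {A W : Type*} [AddCommGroup A] [Module ℝ A] [AddCommGroup W] [Module ℝ W]
    (σx : W →ₗ[ℝ] W) (linx : A →ₗ[ℝ] A) (c : A)
    (p : ∀ i : ℕ, (Fin i → A) → W) : ∀ i : ℕ, (Fin i → A) → W :=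
  fun i u =>
    σx (p i u) - (∑ j : Fin i, p i (Function.update u j (linx (u j)))) - p (i + 1) (Fin.cons c u)

/-- The polynomial on the affine space `𝒜` with components `p` (relative to `a₀`) up to
degree `k`: `a ↦ Σ_{i≤k} (1/i!) p_i(a −ᵥ a₀, …, a −ᵥ a₀)`. -/
noncomputable def polyFromComp {A W 𝒜 : Type*} [AddCommGroup A] [Module ℝ A]
    [AddCommGroup W] [Module ℝ W] [AddTorsor A 𝒜]
    (a₀ : 𝒜) (k : ℕ) (p : ∀ i : ℕ, (Fin i → A) → W) : 𝒜 → W :=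
  fun a => ∑ i ∈ Finset.range (k + 1), (i.factorial : ℝ)⁻¹ • p i (fun _ => a -ᵥ a₀)

/-- Uniqueness of coefficients of a vector-valued polynomial function on `ℝ`. -/
lemma coeff_unique {W : Type*} [AddCommGroup W] [Module ℝ W] (N : ℕ) (w : ℕ → W)
    (h : ∀ t : ℝ, ∑ n ∈ range N, t ^ n • w n = 0) : ∀ n, n < N → w n = 0 := by
  intro n hn
  rw [← Module.forall_dual_apply_eq_zero_iff ℝ]
  intro φ
  have hP : ∀ t : ℝ,
      (∑ m ∈ range N, Polynomial.C (φ (w m)) * Polynomial.X ^ m).eval t = 0 := by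
    intro t
    have h2 := congrArg φ (h t)
    rw [map_sum, map_zero] at h2
    simp only [map_smul, smul_eq_mul] at h2
    rw [Polynomial.eval_finset_sum]
    simp only [Polynomial.eval_mul, Polynomial.eval_C, Polynomial.eval_pow, Polynomial.eval_X]
    rw [← h2]
    exact Finset.sum_congr rfl fun m _ => mul_comm _ _
  have h0 := Polynomial.zero_of_eval_zero _ hP
  have h1 := congrArg (fun q => Polynomial.coeff q n) h0
  simpa [Polynomial.finset_sum_coeff, Polynomial.coeff_C_mul, Polynomial.coeff_X_pow,
    Finset.sum_ite_eq, hn] using h1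

/-- The `n`-th coefficient of `t ↦ p ((t • v) +ᵥ a)` computed from the components of `p`
relative to the base point `a₀`. -/
noncomputable def expCoeff {A W 𝒜 : Type*} [AddCommGroup A] [Module ℝ A]
    [AddCommGroup W] [Module ℝ W] [AddTorsor A 𝒜] (a₀ : 𝒜) (k : ℕ)
    (pC : ∀ i : ℕ, MultilinearMap ℝ (fun _ : Fin i => A) W) (v : A) (a : 𝒜) (n : ℕ) : W :=
  ∑ i ∈ range (k + 1), (i.factorial : ℝ)⁻¹ •
    ∑ s ∈ Finset.univ.filter (fun s : Finset (Fin i) => s.card = n),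
      pC i (s.piecewise (fun _ => v) (fun _ => a -ᵥ a₀))

/-- Expansion of `t ↦ p ((t • v) +ᵥ a)` as a polynomial in `t`. -/
lemma expand {A W 𝒜 : Type*} [AddCommGroup A] [Module ℝ A]
    [AddCommGroup W] [Module ℝ W] [AddTorsor A 𝒜] (a₀ : 𝒜) (k : ℕ) (p : 𝒜 → W)
    (pC : ∀ i : ℕ, MultilinearMap ℝ (fun _ : Fin i => A) W)
    (hp : ∀ u : A,
        p (u +ᵥ a₀) = ∑ i ∈ Finset.range (k + 1), (i.factorial : ℝ)⁻¹ • pC i (fun _ => u))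
    (v : A) (a : 𝒜) (t : ℝ) :
    p ((t • v) +ᵥ a) = ∑ n ∈ range (k + 2), t ^ n • expCoeff a₀ k pC v a n := by
  set u₀ : A := a -ᵥ a₀ with hu₀
  have h1 : (t • v) +ᵥ a = (t • v + u₀) +ᵥ a₀ := by
    rw [hu₀, ← vadd_vadd, vsub_vadd]
  rw [h1, hp]
  have h2 : ∀ i : ℕ, i ≤ k + 1 → (pC i) (fun _ => t • v + u₀)
      = ∑ n ∈ range (k + 2), t ^ n •
          ∑ s ∈ Finset.univ.filter (fun s : Finset (Fin i) => s.card = n),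
            pC i (s.piecewise (fun _ => v) (fun _ => u₀)) := by
    intro i hik
    have hadd : (fun _ : Fin i => t • v + u₀)
        = (fun _ : Fin i => t • v) + (fun _ : Fin i => u₀) := rfl
    rw [hadd, MultilinearMap.map_add_univ]
    have h3 : ∀ s : Finset (Fin i),
        pC i (s.piecewise (fun _ => t • v) (fun _ => u₀))
          = t ^ s.card • pC i (s.piecewise (fun _ => v) (fun _ => u₀)) := by
      intro s
      have hpw : s.piecewise (fun _ : Fin i => t • v) (fun _ => u₀)
          = s.piecewise (fun j => t • (s.piecewise (fun _ : Fin i => v) (fun _ => u₀)) j)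
              (s.piecewise (fun _ : Fin i => v) (fun _ => u₀)) := by
        funext j
        by_cases hj : j ∈ s <;> simp [Finset.piecewise, hj]
      rw [hpw, MultilinearMap.map_piecewise_smul]
      simp
    calc (∑ s : Finset (Fin i), pC i (s.piecewise (fun _ => t • v) (fun _ => u₀)))
        = ∑ s : Finset (Fin i), t ^ s.card • pC i (s.piecewise (fun _ => v) (fun _ => u₀)) :=
          Finset.sum_congr rfl fun s _ => h3 s
      _ = ∑ n ∈ range (k + 2),
            ∑ s ∈ Finset.univ.filter (fun s : Finset (Fin i) => s.card = n),
              t ^ s.card • pC i (s.piecewise (fun _ => v) (fun _ => u₀)) := by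
          refine (Finset.sum_fiberwise_of_maps_to (fun s _ => ?_) _).symm
          rw [Finset.mem_range]
          have := s.card_le_univ
          simp only [Finset.card_univ, Fintype.card_fin] at this
          omega
      _ = ∑ n ∈ range (k + 2), t ^ n •
            ∑ s ∈ Finset.univ.filter (fun s : Finset (Fin i) => s.card = n),
              pC i (s.piecewise (fun _ => v) (fun _ => u₀)) := by
          refine Finset.sum_congr rfl fun n _ => ?_
          rw [Finset.smul_sum]
          refine Finset.sum_congr rfl fun s hs => ?_
          rw [Finset.mem_filter] at hs
          rw [hs.2]
  calc (∑ i ∈ range (k + 1), (i.factorial : ℝ)⁻¹ • pC i (fun _ => t • v + u₀))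
      = ∑ i ∈ range (k + 1), ∑ n ∈ range (k + 2), t ^ n • ((i.factorial : ℝ)⁻¹ •
          ∑ s ∈ Finset.univ.filter (fun s : Finset (Fin i) => s.card = n),
            pC i (s.piecewise (fun _ => v) (fun _ => u₀))) := by
        refine Finset.sum_congr rfl fun i hi => ?_
        rw [Finset.mem_range] at hi
        rw [h2 i (by omega), Finset.smul_sum]
        exact Finset.sum_congr rfl fun n _ => smul_comm _ _ _
    _ = ∑ n ∈ range (k + 2), ∑ i ∈ range (k + 1), t ^ n • ((i.factorial : ℝ)⁻¹ •
          ∑ s ∈ Finset.univ.filter (fun s : Finset (Fin i) => s.card = n),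
            pC i (s.piecewise (fun _ => v) (fun _ => u₀))) := Finset.sum_comm
    _ = ∑ n ∈ range (k + 2), t ^ n • expCoeff a₀ k pC v a n := by
        refine Finset.sum_congr rfl fun n _ => ?_
        rw [expCoeff, Finset.smul_sum]

/-- The acted polynomial computed from components relative to `a₀` equals
`σx (p a) − c₁(a)` where `c₁(a)` is the first coefficient of `t ↦ p((t•v) +ᵥ a)`
with `v = c + linx (a −ᵥ a₀)`. -/
lemma key {A W 𝒜 : Type*} [AddCommGroup A] [Module ℝ A]
    [AddCommGroup W] [Module ℝ W] [AddTorsor A 𝒜]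
    (σx : W →ₗ[ℝ] W) (linx : A →ₗ[ℝ] A) (k : ℕ) (a₀ : 𝒜) (p : 𝒜 → W)
    (pC : ∀ i : ℕ, MultilinearMap ℝ (fun _ : Fin i => A) W)
    (hpsym : ∀ (i : ℕ) (e : Equiv.Perm (Fin i)) (u : Fin i → A),
        pC i (fun t => u (e t)) = pC i u)
    (hptrunc : pC (k + 1) = 0)
    (hp : ∀ u : A,
        p (u +ᵥ a₀) = ∑ i ∈ Finset.range (k + 1), (i.factorial : ℝ)⁻¹ • pC i (fun _ => u))
    (c : A) (a : 𝒜) :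
    polyFromComp a₀ k (actedPolyComp σx linx c (fun i (u : Fin i → A) => pC i u)) a
      = σx (p a) - expCoeff a₀ k pC (c + linx (a -ᵥ a₀)) a 1 := by
  set u : A := a -ᵥ a₀ with hu
  have hA : σx (p a) = ∑ i ∈ range (k + 1),
      (i.factorial : ℝ)⁻¹ • σx (pC i (fun _ => u)) := by
    have : p a = ∑ i ∈ range (k + 1), (i.factorial : ℝ)⁻¹ • pC i (fun _ => u) := by
      conv_lhs => rw [← vsub_vadd a a₀]
      exact hp u
    rw [this, map_sum]
    exact Finset.sum_congr rfl fun i _ => map_smul σx _ _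
  have hB : ∀ (i : ℕ) (v : A),
      (∑ s ∈ Finset.univ.filter (fun s : Finset (Fin i) => s.card = 1),
          pC i (s.piecewise (fun _ => v) (fun _ => u)))
        = ∑ j : Fin i, pC i (Function.update (fun _ => u) j v) := by
    intro i v
    have himg : (Finset.univ.filter fun s : Finset (Fin i) => s.card = 1)
        = Finset.univ.image (fun j : Fin i => ({j} : Finset (Fin i))) := by
      ext s
      simp [Finset.card_eq_one, eq_comm]
    rw [himg, Finset.sum_image (fun x _ y _ h => Finset.singleton_injective h)]
    refine Finset.sum_congr rfl fun j _ => ?_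
    rw [Finset.piecewise_singleton]
  have hD : ∀ (m : ℕ) (j : Fin (m + 1)) (z : A),
      pC (m + 1) (Function.update (fun _ : Fin (m + 1) => u) j z)
        = pC (m + 1) (Fin.cons z (fun _ : Fin m => u)) := by
    intro m j z
    have hcons : Fin.cons z (fun _ : Fin m => u)
        = Function.update (fun _ : Fin (m + 1) => u) 0 z := by
      funext t
      refine Fin.cases ?_ (fun s => ?_) t
      · simp
      · simp [Function.update_apply, (Fin.succ_ne_zero s)]
    rw [hcons]
    have he : (fun t => (Function.update (fun _ : Fin (m + 1) => u) 0 z)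
          ((Equiv.swap 0 j) t))
        = Function.update (fun _ : Fin (m + 1) => u) j z := by
      funext t
      simp only [Function.update_apply]
      by_cases ht : t = j
      · simp [ht]
      · have h0 : Equiv.swap (0 : Fin (m + 1)) j t ≠ 0 := by
          intro hh
          apply ht
          have := Equiv.swap_apply_right (0 : Fin (m + 1)) j
          exact (Equiv.swap (0 : Fin (m + 1)) j).injective (hh.trans this.symm)
        simp [h0, ht]
    rw [← he, hpsym]
  have hfac : ∀ m : ℕ, ((m + 1).factorial : ℝ)⁻¹ * ((m : ℝ) + 1) = (m.factorial : ℝ)⁻¹ := by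
    intro m
    have h1 : ((m : ℝ) + 1) ≠ 0 := by positivity
    have h2 : (m.factorial : ℝ) ≠ 0 := Nat.cast_ne_zero.mpr m.factorial_ne_zero
    rw [Nat.factorial_succ]
    push_cast
    field_simp
  have hC2 : (∑ i ∈ range (k + 1), (i.factorial : ℝ)⁻¹ •
        ∑ j : Fin i, pC i (Function.update (fun _ : Fin i => u) j c))
      = ∑ m ∈ range k, (m.factorial : ℝ)⁻¹ •
          pC (m + 1) (Fin.cons c (fun _ : Fin m => u)) := by
    rw [Finset.sum_range_succ']
    simp only [Finset.univ_eq_empty, Finset.sum_empty, smul_zero, add_zero]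
    refine Finset.sum_congr rfl fun m _ => ?_
    have : (∑ j : Fin (m + 1), pC (m + 1) (Function.update (fun _ : Fin (m + 1) => u) j c))
        = (m + 1) • pC (m + 1) (Fin.cons c (fun _ : Fin m => u)) := by
      rw [Finset.sum_congr rfl fun j _ => hD m j c]
      simp [Finset.card_univ]
    rw [this, ← Nat.cast_smul_eq_nsmul ℝ, smul_smul]
    push_cast
    rw [hfac m]
  have hC1 : (∑ i ∈ range (k + 1), (i.factorial : ℝ)⁻¹ •
        pC (i + 1) (Fin.cons c (fun _ : Fin i => u)))
      = ∑ m ∈ range k, (m.factorial : ℝ)⁻¹ •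
          pC (m + 1) (Fin.cons c (fun _ : Fin m => u)) := by
    rw [Finset.sum_range_succ, hptrunc]
    simp
  simp only [polyFromComp, actedPolyComp, smul_sub, Finset.sum_sub_distrib]
  rw [hA, ← hu]
  rw [show expCoeff a₀ k pC (c + linx u) a 1
      = (∑ i ∈ range (k + 1), (i.factorial : ℝ)⁻¹ •
          ∑ j : Fin i, pC i (Function.update (fun _ : Fin i => u) j c))
        + ∑ i ∈ range (k + 1), (i.factorial : ℝ)⁻¹ •
            ∑ j : Fin i, pC i (Function.update (fun _ : Fin i => u) j (linx u)) from ?_]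
  · rw [hC2, ← hC1]
    abel
  · rw [expCoeff, ← Finset.sum_add_distrib]
    refine Finset.sum_congr rfl fun i _ => ?_
    rw [← hu, hB i (c + linx u), ← smul_add, ← Finset.sum_add_distrib]
    refine congrArg _ (Finset.sum_congr rfl fun j _ => ?_)
    exact (pC i).map_update_add _ j c (linx u)

/-- The polynomial `x·p`, defined via components relative to a base point,
does not depend on the base point: computing it from the components of `p` relative to `a₀`
or relative to `a₀'` yields the same function `𝒜 → W`. -/
theorem action_on_polynomials_independent_of_base_point
    {L : Type*} [LieRing L] [LieAlgebra ℝ L]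
    {A : Type*} [AddCommGroup A] [Module ℝ A]
    {𝒜 : Type*} [AddTorsor A 𝒜]
    {W : Type*} [AddCommGroup W] [Module ℝ W]
    (act : L → 𝒜 → A) (lin : L → A →ₗ[ℝ] A)
    (hadd : ∀ (x y : L) (a : 𝒜), act (x + y) a = act x a + act y a)
    (hsmul : ∀ (r : ℝ) (x : L) (a : 𝒜), act (r • x) a = r • act x a)
    (haff : ∀ (x : L) (u : A) (a : 𝒜), act x (u +ᵥ a) = act x a + lin x u)
    (hcoc : ∀ (x y : L) (a : 𝒜), lin x (act y a) - lin y (act x a) - act ⁅x, y⁆ a = 0)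
    (σ : L →ₗ[ℝ] W →ₗ[ℝ] W)
    (hσ : ∀ x y : L, σ ⁅x, y⁆ = σ x ∘ₗ σ y - σ y ∘ₗ σ x)
    (k : ℕ) (a₀ a₀' : 𝒜) (p : 𝒜 → W)
    (pC qC : ∀ i : ℕ, MultilinearMap ℝ (fun _ : Fin i => A) W)
    (hpsym : ∀ (i : ℕ) (e : Equiv.Perm (Fin i)) (u : Fin i → A),
        pC i (fun t => u (e t)) = pC i u)
    (hqsym : ∀ (i : ℕ) (e : Equiv.Perm (Fin i)) (u : Fin i → A),
        qC i (fun t => u (e t)) = qC i u)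
    (hptrunc : pC (k + 1) = 0) (hqtrunc : qC (k + 1) = 0)
    (hp : ∀ u : A,
        p (u +ᵥ a₀) = ∑ i ∈ Finset.range (k + 1), (i.factorial : ℝ)⁻¹ • pC i (fun _ => u))
    (hq : ∀ u : A,
        p (u +ᵥ a₀') = ∑ i ∈ Finset.range (k + 1), (i.factorial : ℝ)⁻¹ • qC i (fun _ => u))
    (x : L) :
    ∀ a : 𝒜,
      polyFromComp a₀ k
          (actedPolyComp (σ x) (lin x) (act x a₀) (fun i (u : Fin i → A) => pC i u)) a
        = polyFromComp a₀' k
            (actedPolyComp (σ x) (lin x) (act x a₀') (fun i (u : Fin i → A) => qC i u)) a := by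
  intro a
  have hva : act x a = act x a₀ + lin x (a -ᵥ a₀) := by
    conv_lhs => rw [← vsub_vadd a a₀]
    exact haff x (a -ᵥ a₀) a₀
  have hva' : act x a = act x a₀' + lin x (a -ᵥ a₀') := by
    conv_lhs => rw [← vsub_vadd a a₀']
    exact haff x (a -ᵥ a₀') a₀'
  rw [key (σ x) (lin x) k a₀ p pC hpsym hptrunc hp (act x a₀) a,
      key (σ x) (lin x) k a₀' p qC hqsym hqtrunc hq (act x a₀') a,
      ← hva, ← hva']
  have hz : ∀ t : ℝ, ∑ n ∈ range (k + 2),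
      t ^ n • (expCoeff a₀ k pC (act x a) a n - expCoeff a₀' k qC (act x a) a n) = 0 := by
    intro t
    simp only [smul_sub, Finset.sum_sub_distrib]
    rw [← expand a₀ k p pC hp (act x a) a t, ← expand a₀' k p qC hq (act x a) a t, sub_self]
  have h1 := coeff_unique (k + 2) _ hz 1 (by omega)
  rw [sub_eq_zero] at h1
  rw [h1]
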